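/- Let m ∈ ℕ and let f(z) = ∑_{n≥m} a_n zⁿ be analytic on 𝔻 with ‖f‖_∞ ≤ 1. Then for every r ≥ 0 with r^{4m} + r² ≤ 1 one has r^m · ∑_{n≥m} |a_n| rⁿ ≤ 1. -/

import Mathlib

open Metric Filter MeasureTheory Topology

noncomputable section

lemma aux_summable (A : ℕ → ℂ) (f : ℂ → ℂ)
    (hrep : ∀ z ∈ Metric.ball (0 : ℂ) 1, HasSum (fun n : ℕ => A n * z ^ n) (f z))
    (s : ℝ) (hs0 : 0 ≤ s) (hs1 : s < 1) :
    Summable fun n : ℕ => ‖A n‖ * s ^ n := by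
  set t : ℝ := (s + 1) / 2 with ht_def
  have ht0 : 0 < t := by simp [ht_def]; linarith
  have hst : s < t := by simp [ht_def]; linarith
  have ht1 : t < 1 := by simp [ht_def]; linarith
  have htball : (t : ℂ) ∈ Metric.ball (0 : ℂ) 1 := by
    simp [Complex.norm_real, abs_of_pos ht0, ht1]
  have hb : BddAbove (Set.range fun n : ℕ => ‖A n * (t : ℂ) ^ n‖) :=
    ((hrep _ htball).summable.tendsto_atTop_zero.norm).bddAbove_range
  obtain ⟨C, hC⟩ := hb
  have hC' : ∀ n : ℕ, ‖A n * (t : ℂ) ^ n‖ ≤ C := fun n => hC ⟨n, rfl⟩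
  have hgeo : Summable fun n : ℕ => C * (s / t) ^ n :=
    (summable_geometric_of_lt_one (by positivity)
      ((div_lt_one ht0).mpr hst)).mul_left C
  refine Summable.of_nonneg_of_le (fun n => by positivity) (fun n => ?_) hgeo
  have h1 : ‖A n‖ * s ^ n = ‖A n * (t : ℂ) ^ n‖ * (s / t) ^ n := by
    rw [norm_mul, norm_pow, Complex.norm_real, Real.norm_eq_abs, abs_of_pos ht0, mul_assoc,
      ← mul_pow]
    rw [mul_div_cancel₀ _ (ne_of_gt ht0)]
  rw [h1]
  exact mul_le_mul_of_nonneg_right (hC' n) (by positivity)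

lemma fourier_nat_pow (x : AddCircle (2 * Real.pi)) (n : ℕ) :
    fourier (n : ℤ) x = (fourier 1 x) ^ n := by
  induction n with
  | zero => simpa using fourier_zero
  | succ k ih =>
    have h : ((k + 1 : ℕ) : ℤ) = (k : ℤ) + 1 := by push_cast; ring
    rw [h, fourier_add, ih, pow_succ]

lemma parseval_finset (A : ℕ → ℂ) (f : ℂ → ℂ)
    (hrep : ∀ z ∈ Metric.ball (0 : ℂ) 1, HasSum (fun n : ℕ => A n * z ^ n) (f z))
    (hbd : ∀ z ∈ Metric.ball (0 : ℂ) 1, ‖f z‖ ≤ 1)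
    (s : ℝ) (hs0 : 0 ≤ s) (hs1 : s < 1) (F : Finset ℕ) :
    ∑ n ∈ F, (‖A n‖ * s ^ n) ^ 2 ≤ 1 := by
  haveI : Fact (0 < 2 * Real.pi) := ⟨by positivity⟩
  set c : ℕ → ℂ := fun n => A n * (s : ℂ) ^ n with hc_def
  have hcnorm : ∀ n, ‖c n‖ = ‖A n‖ * s ^ n := by
    intro n
    rw [hc_def, norm_mul, norm_pow, Complex.norm_real, Real.norm_eq_abs,
      abs_of_nonneg hs0]
  have hc : Summable fun n => ‖c n‖ := by
    simp only [hcnorm]; exact aux_summable A f hrep s hs0 hs1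
  -- the continuous function g = sum of the series
  have hsmul : Summable fun n : ℕ =>
      c n • (fourier (n : ℤ) : C(AddCircle (2 * Real.pi), ℂ)) := by
    apply Summable.of_norm
    simpa only [norm_smul, fourier_norm, mul_one] using hc
  obtain ⟨g, hg⟩ := hsmul
  -- pointwise values of g
  have hgx : ∀ x : AddCircle (2 * Real.pi), ‖g x‖ ≤ 1 := by
    intro x
    have hx : HasSum (fun n : ℕ => c n * fourier (n : ℤ) x) (g x) := by
      have := hg.mapL (ContinuousMap.evalCLM ℂ x)
      simpa [ContinuousMap.evalCLM, smul_eq_mul] using this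
    set z : ℂ := (s : ℂ) * fourier 1 x with hz_def
    have hznorm : ‖z‖ = s := by
      have h1 : ‖fourier (1 : ℤ) x‖ = 1 := by
        rw [fourier_apply, Circle.norm_coe]
      rw [hz_def, norm_mul, Complex.norm_real, Real.norm_eq_abs,
        abs_of_nonneg hs0, h1, mul_one]
    have hzball : z ∈ Metric.ball (0 : ℂ) 1 := by
      simp only [mem_ball_zero_iff, hznorm]; exact hs1
    have heq : (fun n : ℕ => c n * fourier (n : ℤ) x)
        = fun n : ℕ => A n * z ^ n := by
      funext n
      rw [fourier_nat_pow, hc_def, hz_def, mul_pow]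
      ring
    rw [heq] at hx
    rw [hx.unique (hrep z hzball)]
    exact hbd z hzball
  -- move to L²
  set G : Lp ℂ 2 (@AddCircle.haarAddCircle (2 * Real.pi) _) :=
    ContinuousMap.toLp (E := ℂ) 2 (@AddCircle.haarAddCircle (2 * Real.pi) _) ℂ g with hG_def
  have hGsum : HasSum (fun n : ℕ => c n • fourierLp 2 (n : ℤ)) G := by
    have := hg.mapL (ContinuousMap.toLp (E := ℂ) 2 (@AddCircle.haarAddCircle (2 * Real.pi) _) ℂ)
    simpa using this
  -- coefficients of G
  have hcoeff : ∀ n₀ : ℕ, fourierBasis.repr G ((n₀ : ℤ)) = c n₀ := by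
    intro n₀
    have h2 := hGsum.mapL (innerSL ℂ (fourierLp (T := 2 * Real.pi) 2 ((n₀ : ℤ))))
    have horth := @orthonormal_fourier (2 * Real.pi) _
    rw [orthonormal_iff_ite] at horth
    have heq : (fun n : ℕ =>
        (innerSL ℂ (fourierLp (T := 2 * Real.pi) 2 ((n₀ : ℤ)))) (c n • fourierLp (T := 2 * Real.pi) 2 ((n : ℤ))))
        = fun n : ℕ => if n = n₀ then c n₀ else 0 := by
      funext n
      rw [innerSL_apply_apply, inner_smul_right, horth]
      by_cases h : n = n₀
      · simp [h]
      · have : ¬ ((n₀ : ℤ) = (n : ℤ)) := by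
          simpa [eq_comm] using h
        simp [this, h]
    rw [heq] at h2
    have h3 : (fun n : ℕ => if n = n₀ then c n₀ else 0) = fun n : ℕ =>
        if n = n₀ then c n₀ else 0 := rfl
    have h4 := (hasSum_ite_eq n₀ (c n₀)).unique h2
    rw [fourierBasis.repr_apply_apply]
    have h5 : (fourierBasis (T := 2 * Real.pi)) ((n₀ : ℤ))
        = fourierLp (T := 2 * Real.pi) 2 ((n₀ : ℤ)) := congrFun coe_fourierBasis _
    rw [h5]
    simpa using h4.symm
  -- summability of squared coefficients
  have hsqsummable : Summable fun i : ℤ => ‖fourierBasis.repr G i‖ ^ 2 := by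
    have h := (lp.memℓp (fourierBasis.repr G)).summable (p := 2) (by norm_num)
    refine h.congr fun i => ?_
    rw [ENNReal.toReal_ofNat, Real.rpow_two]
  -- Parseval bound
  have hparseval : ∑' i : ℤ, ‖fourierBasis.repr G i‖ ^ 2 ≤ 1 := by
    have h1 : ∑' i : ℤ, ‖fourierBasis.repr G i‖ ^ 2
        = ∫ t : AddCircle (2 * Real.pi), ‖G t‖ ^ 2 ∂(@AddCircle.haarAddCircle (2 * Real.pi) _) := by
      simp_rw [fourierBasis_repr]
      exact tsum_sq_fourierCoeff G
    rw [h1]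
    have h2 : ∫ t : AddCircle (2 * Real.pi), ‖G t‖ ^ 2 ∂(@AddCircle.haarAddCircle (2 * Real.pi) _)
        = ∫ t : AddCircle (2 * Real.pi), ‖g t‖ ^ 2 ∂(@AddCircle.haarAddCircle (2 * Real.pi) _) := by
      refine integral_congr_ae ?_
      filter_upwards [ContinuousMap.coeFn_toLp (p := 2)
        (μ := @AddCircle.haarAddCircle (2 * Real.pi) _) (𝕜 := ℂ) g] with t ht
      rw [hG_def, ht]
    rw [h2]
    calc ∫ t : AddCircle (2 * Real.pi), ‖g t‖ ^ 2 ∂(@AddCircle.haarAddCircle (2 * Real.pi) _)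
        ≤ ‖∫ t : AddCircle (2 * Real.pi), ‖g t‖ ^ 2 ∂(@AddCircle.haarAddCircle (2 * Real.pi) _)‖ :=
          le_abs_self _
      _ ≤ 1 := by
          have := norm_integral_le_of_norm_le_const
            (μ := @AddCircle.haarAddCircle (2 * Real.pi) _)
            (f := fun t => (‖g t‖ ^ 2 : ℝ)) (C := 1) ?_
          · simpa using this
          · filter_upwards with t
            have h3 : ‖g t‖ ^ 2 ≤ 1 := by
              have := hgx t
              nlinarith [norm_nonneg (g t)]
            rw [Real.norm_eq_abs, abs_of_nonneg (by positivity)]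
            exact h3
  -- conclude
  calc ∑ n ∈ F, (‖A n‖ * s ^ n) ^ 2
      = ∑ i ∈ F.map ⟨(fun n : ℕ => (n : ℤ)), fun a b h => by simpa using h⟩,
        ‖fourierBasis.repr G i‖ ^ 2 := by
        rw [Finset.sum_map]
        refine Finset.sum_congr rfl fun n _ => ?_
        simp only [Function.Embedding.coeFn_mk]
        change (‖A n‖ * s ^ n) ^ 2 = ‖fourierBasis.repr G (n : ℤ)‖ ^ 2
        rw [hcoeff n, hcnorm n]
    _ ≤ ∑' i : ℤ, ‖fourierBasis.repr G i‖ ^ 2 :=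
        Summable.sum_le_tsum _ (fun i _ => sq_nonneg _) hsqsummable
    _ ≤ 1 := hparseval

lemma sumsq_le (A : ℕ → ℂ) (f : ℂ → ℂ)
    (hrep : ∀ z ∈ Metric.ball (0 : ℂ) 1, HasSum (fun n : ℕ => A n * z ^ n) (f z))
    (hbd : ∀ z ∈ Metric.ball (0 : ℂ) 1, ‖f z‖ ≤ 1)
    (F : Finset ℕ) : ∑ n ∈ F, ‖A n‖ ^ 2 ≤ 1 := by
  set N := F.sup id with hN_def
  set C := ∑ n ∈ F, ‖A n‖ ^ 2 with hC_def
  have key : ∀ s : ℝ, 0 ≤ s → s < 1 → s ^ (2 * N) * C ≤ 1 := by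
    intro s hs0 hs1
    calc s ^ (2 * N) * C = ∑ n ∈ F, s ^ (2 * N) * ‖A n‖ ^ 2 := by
          rw [hC_def, Finset.mul_sum]
      _ ≤ ∑ n ∈ F, (‖A n‖ * s ^ n) ^ 2 := by
          refine Finset.sum_le_sum fun n hn => ?_
          have hnN : n ≤ N := Finset.le_sup (f := id) hn
          have hpow : s ^ (2 * N) ≤ s ^ (2 * n) :=
            pow_le_pow_of_le_one hs0 hs1.le (by omega)
          calc s ^ (2 * N) * ‖A n‖ ^ 2 ≤ s ^ (2 * n) * ‖A n‖ ^ 2 := by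
                nlinarith [sq_nonneg ‖A n‖]
            _ = (‖A n‖ * s ^ n) ^ 2 := by rw [mul_pow, ← pow_mul]; ring
      _ ≤ 1 := parseval_finset A f hrep hbd s hs0 hs1 F
  have hu : Tendsto (fun k : ℕ => (1 - 1 / ((k : ℝ) + 1)) ^ (2 * N) * C) atTop
      (𝓝 ((1 : ℝ) ^ (2 * N) * C)) := by
    refine Tendsto.mul_const C (Tendsto.pow ?_ _)
    have h := tendsto_one_div_add_atTop_nhds_zero_nat (𝕜 := ℝ)
    simpa using (tendsto_const_nhds (x := (1 : ℝ))).sub h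
  have hle : (1 : ℝ) ^ (2 * N) * C ≤ 1 := by
    refine le_of_tendsto hu (Eventually.of_forall fun k => ?_)
    refine key _ ?_ ?_
    · have h1 : (1 : ℝ) / ((k : ℝ) + 1) ≤ 1 := by
        rw [div_le_one (by positivity)]
        have : (0:ℝ) ≤ (k : ℝ) := Nat.cast_nonneg k
        linarith
      linarith
    · have h2 : (0 : ℝ) < 1 / ((k : ℝ) + 1) := by positivity
      linarith
  simpa using hle

theorem shifted_majorant_series_bound
    (m : ℕ) (f : ℂ → ℂ) (A : ℕ → ℂ)
    (hrep : ∀ z ∈ Metric.ball (0 : ℂ) 1, HasSum (fun n : ℕ => A n * z ^ n) (f z))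
    (hvan : ∀ n, n < m → A n = 0)
    (hbd : ∀ z ∈ Metric.ball (0 : ℂ) 1, ‖f z‖ ≤ 1)
    (r : ℝ) (hr0 : 0 ≤ r) (hr : r ^ (4 * m) + r ^ 2 ≤ 1) :
    r ^ m * ∑' n : ℕ, ‖A n‖ * r ^ n ≤ 1 := by
  rcases eq_or_lt_of_le hr0 with hrz | hrpos
  · -- r = 0
    obtain rfl : r = 0 := hrz.symm
    have htsum : ∑' n : ℕ, ‖A n‖ * (0 : ℝ) ^ n = ‖A 0‖ := by
      rw [tsum_eq_single 0]
      · simp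
      · intro n hn; simp [zero_pow hn]
    rcases Nat.eq_zero_or_pos m with hm | hm
    · subst hm
      rw [pow_zero, one_mul, htsum]
      have hA0 : A 0 = f 0 := by
        have h0 := hrep 0 (by simp)
        have h1 : HasSum (fun n : ℕ => A n * (0 : ℂ) ^ n) (A 0) := by
          have := hasSum_single (f := fun n : ℕ => A n * (0 : ℂ) ^ n) 0
            (fun n hn => by simp [zero_pow hn])
          simpa using this
        exact h1.unique h0
      rw [hA0]
      exact hbd 0 (by simp)
    · rw [zero_pow (by omega), zero_mul]
      exact zero_le_one
  · -- 0 < r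
    have hr1 : r < 1 := by
      by_contra h
      push_neg at h
      have h1 : (1 : ℝ) ≤ r ^ (4 * m) := one_le_pow₀ h
      nlinarith
    have h1r2 : 0 < 1 - r ^ 2 := by nlinarith
    have h4m : r ^ (4 * m) ≤ 1 - r ^ 2 := by linarith
    have hr2lt : r ^ 2 < 1 := by nlinarith
    have hsumA2 : Summable fun n => ‖A n‖ ^ 2 :=
      summable_of_sum_le (fun n => sq_nonneg _) (sumsq_le A f hrep hbd)
    have hsum := aux_summable A f hrep r hr0 hr1
    set B := Real.sqrt (r ^ (2 * m) / (1 - r ^ 2)) with hB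
    have hFbound : ∀ F : Finset ℕ, ∑ n ∈ F, ‖A n‖ * r ^ n ≤ B := by
      intro F
      set F' := F.filter (fun n => m ≤ n) with hF'
      have hsplit : ∑ n ∈ F, ‖A n‖ * r ^ n = ∑ n ∈ F', ‖A n‖ * r ^ n := by
        rw [hF', Finset.sum_filter_of_ne]
        intro n _ hne
        by_contra hcon
        push_neg at hcon
        exact hne (by rw [hvan n hcon]; simp)
      have hcs := Finset.sum_mul_sq_le_sq_mul_sq F' (fun n => ‖A n‖) (fun n => r ^ n)
      have hA2 : ∑ n ∈ F', ‖A n‖ ^ 2 ≤ 1 := sumsq_le A f hrep hbd F'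
      have hgeosum : Summable fun k : ℕ => (r ^ 2) ^ (k + m) := by
        have h := (summable_geometric_of_lt_one (by positivity) hr2lt).mul_right ((r ^ 2) ^ m)
        refine h.congr fun k => ?_
        rw [← pow_add]
      have hgeom : ∑ n ∈ F', (r ^ n) ^ 2 ≤ r ^ (2 * m) / (1 - r ^ 2) := by
        have heach : ∀ n ∈ F', (r ^ n) ^ 2 = (r ^ 2) ^ n := by
          intro n _; rw [← pow_mul, mul_comm, pow_mul]
        have hmem : ∀ n ∈ F', m ≤ n := by
          intro n hn; exact (Finset.mem_filter.mp hn).2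
        have himg : ∑ n ∈ F', (r ^ 2) ^ n
            = ∑ k ∈ F'.image (fun n => n - m), (r ^ 2) ^ (k + m) := by
          rw [Finset.sum_image (fun a ha b hb h => by
            have := hmem a ha; have := hmem b hb; omega)]
          refine Finset.sum_congr rfl fun n hn => ?_
          rw [Nat.sub_add_cancel (hmem n hn)]
        have htail : ∑ k ∈ F'.image (fun n => n - m), (r ^ 2) ^ (k + m)
            ≤ ∑' k : ℕ, (r ^ 2) ^ (k + m) :=
          Summable.sum_le_tsum _ (fun k _ => by positivity) hgeosum
        have htsumgeo : ∑' k : ℕ, (r ^ 2) ^ (k + m) = r ^ (2 * m) / (1 - r ^ 2) := by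
          have h1 : (fun k : ℕ => (r ^ 2) ^ (k + m))
              = fun k : ℕ => (r ^ 2) ^ k * (r ^ 2) ^ m := by
            funext k; rw [← pow_add]
          rw [h1, tsum_mul_right, tsum_geometric_of_lt_one (by positivity) hr2lt,
            ← pow_mul]
          ring
        calc ∑ n ∈ F', (r ^ n) ^ 2 = ∑ n ∈ F', (r ^ 2) ^ n :=
              Finset.sum_congr rfl heach
          _ ≤ ∑' k : ℕ, (r ^ 2) ^ (k + m) := himg ▸ htail
          _ = r ^ (2 * m) / (1 - r ^ 2) := htsumgeo
      have hsq : (∑ n ∈ F', ‖A n‖ * r ^ n) ^ 2 ≤ r ^ (2 * m) / (1 - r ^ 2) := by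
        calc (∑ n ∈ F', ‖A n‖ * r ^ n) ^ 2
            ≤ (∑ n ∈ F', ‖A n‖ ^ 2) * ∑ n ∈ F', (r ^ n) ^ 2 := hcs
          _ ≤ 1 * (r ^ (2 * m) / (1 - r ^ 2)) := by
              refine mul_le_mul hA2 hgeom ?_ zero_le_one
              exact Finset.sum_nonneg fun n _ => sq_nonneg _
          _ = r ^ (2 * m) / (1 - r ^ 2) := one_mul _
      rw [hsplit, hB]
      have hnonneg : 0 ≤ ∑ n ∈ F', ‖A n‖ * r ^ n :=
        Finset.sum_nonneg fun n _ => by positivity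
      exact (Real.le_sqrt hnonneg (by positivity)).mpr hsq
    have htsum_le : ∑' n : ℕ, ‖A n‖ * r ^ n ≤ B := Summable.tsum_le_of_sum_le hsum hFbound
    have hrm : (0 : ℝ) ≤ r ^ m := by positivity
    calc r ^ m * ∑' n : ℕ, ‖A n‖ * r ^ n ≤ r ^ m * B :=
          mul_le_mul_of_nonneg_left htsum_le hrm
      _ = Real.sqrt (r ^ (2 * m)) * B := by
          rw [show r ^ (2 * m) = (r ^ m) ^ 2 by rw [← pow_mul, mul_comm]]
          rw [Real.sqrt_sq hrm]
      _ = Real.sqrt (r ^ (2 * m) * (r ^ (2 * m) / (1 - r ^ 2))) := by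
          rw [hB, ← Real.sqrt_mul (by positivity)]
      _ ≤ 1 := by
          rw [show r ^ (2 * m) * (r ^ (2 * m) / (1 - r ^ 2))
              = r ^ (4 * m) / (1 - r ^ 2) by
            rw [mul_div_assoc', ← pow_add]; congr 2; omega]
          have hle1 : r ^ (4 * m) / (1 - r ^ 2) ≤ 1 := (div_le_one h1r2).mpr h4m
          calc Real.sqrt (r ^ (4 * m) / (1 - r ^ 2)) ≤ Real.sqrt 1 :=
                Real.sqrt_le_sqrt hle1
            _ = 1 := Real.sqrt_one
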